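/- Let z1, z2 be linearly independent vectors in EuclideanSpace ℝ (Fin 2) and set z3 = -z1 - z2. Define the real 3×3 matrix A by A = ![![‖z1‖², 0, 0], ![-⟪z2, z1⟫, ‖z2‖², -⟪z2, z3⟫], ![0, -⟪z3, z2⟫, ‖z3‖²]], where ⟪·,·⟫ is the real inner product. Then every complex eigenvalue of A (i.e., every root in ℂ of the characteristic polynomial of A viewed as a complex matrix) has strictly positive real part; equivalently, the matrix Z = -A is Hurwitz. -/
import Mathlib


open scoped InnerProductSpace

theorem stmt_1 (z1 z2 z3 : EuclideanSpace ℝ (Fin 2))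
    (hind : LinearIndependent ℝ ![z1, z2])
    (hz3 : z3 = -z1 - z2)
    (A : Matrix (Fin 3) (Fin 3) ℝ)
    (hA : A = !![‖z1‖ ^ 2, 0, 0;
                 -⟪z2, z1⟫_ℝ, ‖z2‖ ^ 2, -⟪z2, z3⟫_ℝ;
                 0, -⟪z3, z2⟫_ℝ, ‖z3‖ ^ 2]) :
    ∀ μ : ℂ, (Matrix.charpoly (A.map ((↑) : ℝ → ℂ))).IsRoot μ → 0 < μ.re := by
  -- linear independence of z2, z3
  rw [LinearIndependent.pair_iff] at hind
  have hind23 : ∀ s t : ℝ, s • z2 + t • z3 = 0 → s = 0 ∧ t = 0 := by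
    intro s t h
    have h' : (-t) • z1 + (s - t) • z2 = 0 := by
      rw [hz3] at h
      rw [← h]; module
    obtain ⟨h1, h2⟩ := hind _ _ h'
    constructor <;> linarith
  have hz1 : z1 ≠ 0 := by
    intro h; simpa [h] using (hind 1 0 (by simp [h])).1
  have hz2 : z2 ≠ 0 := by
    intro h; simpa [h] using (hind23 1 0 (by simp [h])).1
  have hz3' : z3 ≠ 0 := by
    intro h; simpa [h] using (hind23 0 1 (by simp [h])).2
  -- strict Cauchy-Schwarz
  have hcs1 : ⟪z2, z3⟫_ℝ < ‖z2‖ * ‖z3‖ := by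
    rw [inner_lt_norm_mul_iff_real]
    intro h
    have : ‖z3‖ • z2 + (-‖z2‖) • z3 = 0 := by rw [neg_smul, h]; abel
    exact norm_ne_zero_iff.mpr hz2 (neg_eq_zero.mp (hind23 _ _ this).2)
  have hcs2 : -⟪z2, z3⟫_ℝ < ‖z2‖ * ‖z3‖ := by
    have := @inner_lt_norm_mul_iff_real (EuclideanSpace ℝ (Fin 2)) _ _ z2 (-z3)
    rw [inner_neg_right, norm_neg] at this
    rw [this]
    intro h
    have : ‖z3‖ • z2 + ‖z2‖ • z3 = 0 := by
      rw [smul_neg] at h; rw [h]; abel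
    exact norm_ne_zero_iff.mpr hz2 (hind23 _ _ this).2
  have hD : ⟪z2, z3⟫_ℝ ^ 2 < ‖z2‖ ^ 2 * ‖z3‖ ^ 2 := by nlinarith
  have ha : (0:ℝ) < ‖z1‖ ^ 2 := pow_pos (norm_pos_iff.mpr hz1) 2
  have hc : (0:ℝ) < ‖z2‖ ^ 2 := pow_pos (norm_pos_iff.mpr hz2) 2
  have hf : (0:ℝ) < ‖z3‖ ^ 2 := pow_pos (norm_pos_iff.mpr hz3') 2
  -- evaluate the characteristic polynomial
  intro μ hroot
  have hsymm : ⟪z3, z2⟫_ℝ = ⟪z2, z3⟫_ℝ := real_inner_comm _ _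
  set a : ℝ := ‖z1‖ ^ 2
  set c : ℝ := ‖z2‖ ^ 2
  set f : ℝ := ‖z3‖ ^ 2
  set p : ℝ := ⟪z2, z3⟫_ℝ
  have heval : ((A.map ((↑) : ℝ → ℂ)).charpoly).eval μ
      = (μ - (a:ℂ)) * ((μ - c) * (μ - f) - (p:ℂ) * p) := by
    rw [Matrix.charpoly, ← Polynomial.coe_evalRingHom, RingHom.map_det]
    rw [Matrix.det_fin_three]
    simp [Matrix.charmatrix_apply, hA, hsymm, Matrix.one_apply]
    ring
  rw [Polynomial.IsRoot, heval, mul_eq_zero] at hroot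
  rcases hroot with h | h
  · have : μ = (a:ℂ) := by linear_combination h
    rw [this]; simpa using ha
  · -- μ^2 - (c+f) μ + (c f - p^2) = 0
    have hre : μ.re ^ 2 - μ.im ^ 2 - (c + f) * μ.re + (c * f - p ^ 2) = 0 := by
      have := congrArg Complex.re h
      simp [Complex.sub_re, Complex.mul_re, Complex.sub_im, Complex.mul_im] at this
      nlinarith [this]
    have him : (2 * μ.re - (c + f)) * μ.im = 0 := by
      have := congrArg Complex.im h
      simp [Complex.sub_re, Complex.mul_re, Complex.sub_im, Complex.mul_im] at this
      nlinarith [this]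
    rcases mul_eq_zero.mp him with h1 | h1
    · nlinarith
    · rw [h1] at hre
      nlinarith
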